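/- Fix symmetric n×n real matrices B_1,…,B_k and real numbers α_1,…,α_k. If there exists a positive semidefinite matrix M with ⟨B_i, M⟩ = α_i for i = 1,…,k, then there exists a positive semidefinite matrix M₀ with ⟨B_i, M₀⟩ = α_i for i = 1,…,k and rank(M₀) ≤ ⌊(√(8k+1) − 1)/2⌋. -/

import Mathlib

open Matrix

/-- Trace inner product on square matrices: ⟨X, Y⟩ = tr(XY). -/
noncomputable def ip {m : ℕ} (X Y : Matrix (Fin m) (Fin m) ℝ) : ℝ := (X * Y).trace


lemma psd_factor {n r : ℕ} {M : Matrix (Fin n) (Fin n) ℝ} (hM : M.PosSemidef)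
    (hr : M.rank = r) : ∃ A : Matrix (Fin n) (Fin r) ℝ, M = A * Aᵀ := by
  classical
  have hH := hM.isHermitian
  set μ := hH.eigenvalues with hμ
  have hcard : Fintype.card {i // μ i ≠ 0} = r := by
    rw [← hr, hH.rank_eq_card_non_zero_eigs]
  let e : Fin r ≃ {i // μ i ≠ 0} := (Fintype.equivFinOfCardEq hcard).symm
  set U : Matrix (Fin n) (Fin n) ℝ := (hH.eigenvectorUnitary : Matrix (Fin n) (Fin n) ℝ) with hU
  refine ⟨Matrix.of fun i j => U i (e j) * Real.sqrt (μ (e j)), ?_⟩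
  have hspec := hH.spectral_theorem
  rw [show (RCLike.ofReal ∘ μ) = μ by rw [RCLike.ofReal_real_eq_id]; rfl] at hspec
  ext i i'
  have hL : M i i' = ∑ l, U i l * μ l * U i' l := by
    rw [hspec, Unitary.conjStarAlgAut_apply]
    rw [Matrix.mul_apply]
    congr 1; funext l
    rw [Matrix.mul_diagonal]
    simp [Matrix.star_eq_conjTranspose, Matrix.conjTranspose_apply, hU]
  rw [hL, Matrix.mul_apply]
  have h1 : ∑ l, U i l * μ l * U i' l
      = ∑ l ∈ Finset.univ.filter (fun l => μ l ≠ 0), U i l * μ l * U i' l := by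
    refine (Finset.sum_filter_of_ne ?_).symm
    intro l _ h
    intro hl
    apply h
    simp [hl]
  rw [h1, Finset.sum_subtype (Finset.univ.filter (fun l => μ l ≠ 0))
      (p := fun l => μ l ≠ 0) (by simp) (fun l => U i l * μ l * U i' l)]
  rw [← Equiv.sum_comp e (fun s : {i // μ i ≠ 0} => U i s * μ s * U i' s)]
  congr 1; funext j
  have hnn : 0 ≤ μ (e j) := hM.eigenvalues_nonneg _
  simp only [Matrix.of_apply, Matrix.transpose_apply]
  rw [show (U i (e j) * Real.sqrt (μ (e j))) * (U i' (e j) * Real.sqrt (μ (e j)))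
    = U i (e j) * (Real.sqrt (μ (e j)) * Real.sqrt (μ (e j))) * U i' (e j) by ring,
    Real.mul_self_sqrt hnn]


lemma exists_rank_drop {r : ℕ} {X : Matrix (Fin r) (Fin r) ℝ}
    (hX : X.IsHermitian) (hX0 : X ≠ 0) :
    ∃ c : ℝ, ((1 : Matrix (Fin r) (Fin r) ℝ) - c • X).PosSemidef ∧
      ((1 : Matrix (Fin r) (Fin r) ℝ) - c • X).rank < r := by
  classical
  set ν := hX.eigenvalues with hν
  set U : Matrix (Fin r) (Fin r) ℝ := (hX.eigenvectorUnitary : Matrix (Fin r) (Fin r) ℝ) with hU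
  have hspec : X = U * diagonal ν * star U := by
    have := hX.spectral_theorem
    rwa [show (RCLike.ofReal ∘ ν) = ν by rw [RCLike.ofReal_real_eq_id]; rfl] at this
  have hUU : U * star U = 1 := (Matrix.mem_unitaryGroup_iff).mp hX.eigenvectorUnitary.2
  -- some eigenvalue is nonzero
  have hex : ∃ i, ν i ≠ 0 := by
    by_contra h
    push_neg at h
    apply hX0
    have : diagonal ν = 0 := by
      ext i j
      by_cases hij : i = j <;> simp [Matrix.diagonal_apply, hij, h]
    rw [hspec, this, Matrix.mul_zero, Matrix.zero_mul]
  obtain ⟨i₀, hi₀⟩ := hex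
  obtain ⟨j, -, hj⟩ := Finset.exists_max_image Finset.univ (fun i => |ν i|)
    ⟨i₀, Finset.mem_univ i₀⟩
  have hlam : ν j ≠ 0 := by
    intro h
    have := hj i₀ (Finset.mem_univ i₀)
    rw [h] at this
    simp at this
    exact hi₀ this
  refine ⟨(ν j)⁻¹, ?_, ?_⟩
  all_goals
    have hkey : (1 : Matrix (Fin r) (Fin r) ℝ) - (ν j)⁻¹ • X
        = U * diagonal (fun i => 1 - (ν j)⁻¹ * ν i) * star U := by
      have hd : diagonal (fun i => 1 - (ν j)⁻¹ * ν i)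
          = (1 : Matrix (Fin r) (Fin r) ℝ) - (ν j)⁻¹ • diagonal ν := by
        ext a b
        by_cases hab : a = b <;>
          simp [Matrix.diagonal_apply, hab, Matrix.one_apply, Matrix.sub_apply]
      rw [hd, Matrix.mul_sub, Matrix.sub_mul, Matrix.mul_one, hUU, Matrix.mul_smul,
        Matrix.smul_mul, ← hspec]
  · rw [hkey]
    have hdiag : (diagonal (fun i => 1 - (ν j)⁻¹ * ν i)).PosSemidef := by
      refine Matrix.posSemidef_diagonal_iff.mpr fun i => ?_
      have h1 : |ν i / ν j| ≤ 1 := by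
        rw [abs_div]
        exact div_le_one_of_le₀ (hj i (Finset.mem_univ i)) (abs_nonneg _)
      have h2 : ν i / ν j ≤ 1 := le_trans (le_abs_self _) h1
      rw [div_eq_inv_mul] at h2
      linarith
    have := hdiag.mul_mul_conjTranspose_same U
    rwa [show star U = Uᴴ from rfl]
  · rw [hkey]
    have h1 : (U * diagonal (fun i => 1 - (ν j)⁻¹ * ν i) * star U).rank
        ≤ (diagonal (fun i => 1 - (ν j)⁻¹ * ν i)).rank :=
      le_trans (Matrix.rank_mul_le_left _ _) (Matrix.rank_mul_le_right _ _)
    have h2 : (diagonal (fun i => 1 - (ν j)⁻¹ * ν i)).rank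
        = Fintype.card {i // 1 - (ν j)⁻¹ * ν i ≠ 0} := Matrix.rank_diagonal _
    have h3 : Fintype.card {i // 1 - (ν j)⁻¹ * ν i ≠ 0}
        ≤ Fintype.card {i : Fin r // i ≠ j} := by
      apply Fintype.card_subtype_mono
      intro i hi
      intro hij
      apply hi
      rw [hij, inv_mul_cancel₀ hlam, sub_self]
    have h4 : Fintype.card {i : Fin r // i ≠ j} = r - 1 := by
      rw [Fintype.card_subtype_compl]
      simp
    have hr : 0 < r := Fin.pos j
    omega


lemma le_floor_of_triangle {r k : ℕ} (h : r * (r + 1) ≤ 2 * k) :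
    r ≤ ⌊(Real.sqrt (8 * k + 1) - 1) / 2⌋₊ := by
  apply Nat.le_floor
  have h8 : (0:ℝ) ≤ 8 * k + 1 := by positivity
  have hs : (2 * r + 1 : ℝ) ≤ Real.sqrt (8 * k + 1) := by
    rw [Real.le_sqrt (by positivity) h8]
    have : (r * (r + 1) : ℝ) ≤ 2 * k := by exact_mod_cast h
    nlinarith
  push_cast
  linarith

/-- symmetric matrix from a Sym2-indexed family -/
def symOf {r : ℕ} (c : Sym2 (Fin r) → ℝ) : Matrix (Fin r) (Fin r) ℝ :=
  Matrix.of fun p q => c s(p, q)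

theorem low_rank_feasible_solution (n k : ℕ)
    (B : Fin k → Matrix (Fin n) (Fin n) ℝ) (hB : ∀ i, (B i).IsSymm)
    (α : Fin k → ℝ)
    (hex : ∃ M : Matrix (Fin n) (Fin n) ℝ, M.PosSemidef ∧ ∀ i, ip (B i) M = α i) :
    ∃ M₀ : Matrix (Fin n) (Fin n) ℝ, M₀.PosSemidef ∧ (∀ i, ip (B i) M₀ = α i) ∧
      M₀.rank ≤ ⌊(Real.sqrt (8 * k + 1) - 1) / 2⌋₊ := by
  classical
  obtain ⟨M, hM, hMf⟩ := hex
  set S : Set ℕ := {r | ∃ N : Matrix (Fin n) (Fin n) ℝ,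
    N.PosSemidef ∧ (∀ i, ip (B i) N = α i) ∧ N.rank = r} with hS
  have hSne : S.Nonempty := ⟨M.rank, M, hM, hMf, rfl⟩
  obtain ⟨M₀, hM₀, hM₀f, hM₀r⟩ := Nat.sInf_mem hSne
  refine ⟨M₀, hM₀, hM₀f, ?_⟩
  rw [hM₀r]
  set r₀ := sInf S with hr₀
  apply le_floor_of_triangle
  -- main claim
  by_contra hcon
  push_neg at hcon
  -- k < card (Sym2 (Fin r₀))
  have hcard : k < Fintype.card (Sym2 (Fin r₀)) := by
    rw [Sym2.card, Fintype.card_fin, Nat.choose_two_right, Nat.add_sub_cancel,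
      Nat.mul_comm (r₀ + 1) r₀]
    obtain ⟨m, hm⟩ := Nat.even_mul_succ_self r₀
    omega
  obtain ⟨A, hA⟩ := psd_factor hM₀ hM₀r
  -- the linear map
  let L : (Sym2 (Fin r₀) → ℝ) →ₗ[ℝ] (Fin k → ℝ) :=
    { toFun := fun c i => ((B i) * (A * symOf c * Aᵀ)).trace
      map_add' := by
        intro c c'
        funext i
        have : symOf (c + c') = symOf c + symOf c' := by
          ext p q; simp [symOf]
        simp [this, Matrix.mul_add, Matrix.add_mul, Matrix.trace_add]
      map_smul' := by
        intro s c
        funext i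
        have : symOf (s • c) = s • symOf c := by
          ext p q; simp [symOf]
        simp [this, Matrix.mul_smul, Matrix.smul_mul, Matrix.trace_smul] }
  -- L has nonzero kernel
  have hker : ∃ c : Sym2 (Fin r₀) → ℝ, c ≠ 0 ∧ L c = 0 := by
    by_contra h
    push_neg at h
    have hinj : Function.Injective L := by
      rw [← LinearMap.ker_eq_bot, LinearMap.ker_eq_bot']
      intro c hc
      by_contra hc0
      exact (h c hc0) hc
    have := LinearMap.finrank_le_finrank_of_injective hinj
    rw [Module.finrank_fintype_fun_eq_card, Module.finrank_fintype_fun_eq_card,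
      Fintype.card_fin] at this
    omega
  obtain ⟨c, hc0, hLc⟩ := hker
  set X := symOf c with hX
  have hXsym : X.IsHermitian := by
    ext p q
    simp only [Matrix.conjTranspose_apply, hX, symOf, Matrix.of_apply, star_trivial]
    rw [Sym2.eq_swap]
  have hXne : X ≠ 0 := by
    intro h0
    apply hc0
    funext e
    refine Sym2.inductionOn e fun p q => ?_
    have : X p q = 0 := by rw [h0]; rfl
    simpa [hX, symOf] using this
  obtain ⟨t, hYpsd, hYrank⟩ := exists_rank_drop hXsym hXne
  set Y : Matrix (Fin r₀) (Fin r₀) ℝ := 1 - t • X with hY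
  -- the new matrix
  set M' : Matrix (Fin n) (Fin n) ℝ := A * Y * Aᵀ with hM'
  have hM'psd : M'.PosSemidef := by
    have := hYpsd.mul_mul_conjTranspose_same A
    rwa [show Aᴴ = Aᵀ from Matrix.conjTranspose_eq_transpose_of_trivial A] at this
  have hM'f : ∀ i, ip (B i) M' = α i := by
    intro i
    have hLci : ((B i) * (A * X * Aᵀ)).trace = 0 := congrFun hLc i
    have expand : M' = A * Aᵀ - t • (A * X * Aᵀ) := by
      rw [hM', hY, Matrix.mul_sub, Matrix.mul_one, Matrix.mul_smul, Matrix.sub_mul,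
        Matrix.smul_mul]
    rw [show ip (B i) M' = ((B i) * M').trace from rfl, expand, Matrix.mul_sub,
      Matrix.trace_sub, Matrix.mul_smul, Matrix.trace_smul, hLci, ← hA]
    have := hM₀f i
    rw [show ip (B i) M₀ = ((B i) * M₀).trace from rfl] at this
    rw [this]
    simp
  have hM'rank : M'.rank < r₀ := by
    calc M'.rank ≤ Y.rank :=
          le_trans (Matrix.rank_mul_le_left _ _) (Matrix.rank_mul_le_right _ _)
      _ < r₀ := hYrank
  have : r₀ ≤ M'.rank := Nat.sInf_le ⟨M', hM'psd, hM'f, rfl⟩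
  omega
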